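/- Let M^I = ⊕_{i=1}^{m} J_{c_i} be a preinjective Kronecker representation and N^P = ⊕_{j=1}^{n} Q_{d_j} a preprojective Kronecker representation over an algebraically closed field. Then N^P is a subrepresentation of M^I if and only if Σ_{i=1}^{m} (c_i − 1) ≥ Σ_{j=1}^{n} d_j. -/

import Mathlib

open Matrix

/-- `α` of the preprojective representation `⊕ⱼ Q_{d j}`: blocks `[I;0] : K^{k-1} → K^k`. -/
def QsumA (K : Type*) [Field K] (n : ℕ) (d : ℕ → ℕ) :
    Matrix (Σ j : Fin n, Fin (d (j.1 + 1))) (Σ j : Fin n, Fin (d (j.1 + 1) - 1)) K :=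
  fun x y => if x.1 = y.1 ∧ (x.2 : ℕ) = (y.2 : ℕ) then 1 else 0

/-- `β` of `⊕ⱼ Q_{d j}`: blocks `[0;I] : K^{k-1} → K^k`. -/
def QsumB (K : Type*) [Field K] (n : ℕ) (d : ℕ → ℕ) :
    Matrix (Σ j : Fin n, Fin (d (j.1 + 1))) (Σ j : Fin n, Fin (d (j.1 + 1) - 1)) K :=
  fun x y => if x.1 = y.1 ∧ (x.2 : ℕ) = (y.2 : ℕ) + 1 then 1 else 0

/-- `α` of the preinjective representation `⊕ᵢ J_{c i}`: blocks `[I 0] : K^k → K^{k-1}`. -/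
def JsumA (K : Type*) [Field K] (m : ℕ) (c : ℕ → ℕ) :
    Matrix (Σ i : Fin m, Fin (c (i.1 + 1) - 1)) (Σ i : Fin m, Fin (c (i.1 + 1))) K :=
  fun x y => if x.1 = y.1 ∧ (x.2 : ℕ) = (y.2 : ℕ) then 1 else 0

/-- `β` of `⊕ᵢ J_{c i}`: blocks `[0 I] : K^k → K^{k-1}`. -/
def JsumB (K : Type*) [Field K] (m : ℕ) (c : ℕ → ℕ) :
    Matrix (Σ i : Fin m, Fin (c (i.1 + 1) - 1)) (Σ i : Fin m, Fin (c (i.1 + 1))) K :=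
  fun x y => if x.1 = y.1 ∧ (y.2 : ℕ) = (x.2 : ℕ) + 1 then 1 else 0

namespace PreprojAux

/-- capacity prefix sums -/
def Cps (c : ℕ → ℕ) (i : ℕ) : ℕ := ∑ k ∈ Finset.range i, (c (k + 1) - 1)

/-- dimension prefix sums -/
def Dps (d : ℕ → ℕ) (j : ℕ) : ℕ := ∑ k ∈ Finset.range j, d (k + 1)

/-- global position of `f^{(i)}_a` (descending within a block) -/
def gp (c : ℕ → ℕ) (i a : ℕ) : ℕ := Cps c i + (c (i + 1) - 2 - a)

lemma Cps_succ (c : ℕ → ℕ) (i : ℕ) : Cps c (i + 1) = Cps c i + (c (i + 1) - 1) :=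
  Finset.sum_range_succ _ i

lemma Dps_succ (d : ℕ → ℕ) (j : ℕ) : Dps d (j + 1) = Dps d j + d (j + 1) :=
  Finset.sum_range_succ _ j

lemma Dps_mono (d : ℕ → ℕ) : Monotone (Dps d) := fun _ _ hab =>
  Finset.sum_le_sum_of_subset (Finset.range_subset_range.2 hab)

lemma hpos_inj (d : ℕ → ℕ) {j j' s s' : ℕ} (hs : s < d (j + 1)) (hs' : s' < d (j' + 1))
    (h : Dps d j + s = Dps d j' + s') : j = j' ∧ s = s' := by
  rcases lt_trichotomy j j' with hlt | rfl | hlt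
  · have h1 : Dps d (j + 1) ≤ Dps d j' := Dps_mono d hlt
    have h2 := Dps_succ d j
    omega
  · omega
  · have h1 : Dps d (j' + 1) ≤ Dps d j := Dps_mono d hlt
    have h2 := Dps_succ d j'
    omega

lemma gp_surj (c : ℕ → ℕ) :
    ∀ m p, p < Cps c m → ∃ i a, i < m ∧ a < c (i + 1) - 1 ∧ gp c i a = p := by
  intro m
  induction m with
  | zero => intro p hp; simp [Cps] at hp
  | succ m ih =>
    intro p hp
    by_cases h : p < Cps c m
    · obtain ⟨i, a, h1, h2, h3⟩ := ih p h
      exact ⟨i, a, by omega, h2, h3⟩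
    · have hs := Cps_succ c m
      refine ⟨m, c (m + 1) - 2 - (p - Cps c m), by omega, by omega, ?_⟩
      unfold gp
      omega

lemma sum_Icc_one (f : ℕ → ℕ) (b : ℕ) :
    (∑ i ∈ Finset.Icc 1 b, f i) = ∑ i ∈ Finset.range b, f (i + 1) := by
  induction b with
  | zero => simp
  | succ b ih => rw [Finset.sum_Icc_succ_top (by omega), ih, Finset.sum_range_succ]

variable (K : Type*) [Field K] (m n : ℕ) (c d : ℕ → ℕ)

/-- the map on source spaces -/
def phiM : Matrix (Σ i : Fin m, Fin (c (i.1 + 1))) (Σ j : Fin n, Fin (d (j.1 + 1) - 1)) K :=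
  fun x y =>
    if ((x.2 : ℕ) + 1 < c (x.1.1 + 1) ∧ gp c x.1.1 (x.2 : ℕ) = Dps d y.1.1 + (y.2 : ℕ))
      ∨ (1 ≤ (x.2 : ℕ) ∧ gp c x.1.1 ((x.2 : ℕ) - 1) = Dps d y.1.1 + (y.2 : ℕ) + 1)
    then 1 else 0

/-- the map on target spaces -/
def psiM : Matrix (Σ i : Fin m, Fin (c (i.1 + 1) - 1)) (Σ j : Fin n, Fin (d (j.1 + 1))) K :=
  fun x y => if gp c x.1.1 (x.2 : ℕ) = Dps d y.1.1 + (y.2 : ℕ) then 1 else 0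

lemma relA : JsumA K m c * phiM K m n c d = psiM K m n c d * QsumA K n d := by
  ext ⟨i, a⟩ ⟨j, s⟩
  rw [Matrix.mul_apply, Matrix.mul_apply]
  have ha := a.isLt
  have hs := s.isLt
  rw [Finset.sum_eq_single (⟨i, ⟨(a : ℕ), by omega⟩⟩ : Σ i : Fin m, Fin (c (i.1 + 1)))]
  rotate_left
  · rintro ⟨i', b⟩ - hne
    simp only [JsumA]
    rw [if_neg, zero_mul]
    rintro ⟨rfl, h2⟩
    exact hne (congrArg (Sigma.mk _) (Fin.ext (by first | (simp only [Fin.val_mk] at h2 ⊢; omega) | (simp only [Fin.val_mk] at h2; omega) | omega)))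
  · intro h; exact absurd (Finset.mem_univ _) h
  rw [Finset.sum_eq_single (⟨j, ⟨(s : ℕ), by omega⟩⟩ : Σ j : Fin n, Fin (d (j.1 + 1)))]
  rotate_left
  · rintro ⟨j', t⟩ - hne
    simp only [QsumA]
    rw [if_neg, mul_zero]
    rintro ⟨rfl, h2⟩
    exact hne (congrArg (Sigma.mk _) (Fin.ext (by first | (simp only [Fin.val_mk] at h2 ⊢; omega) | (simp only [Fin.val_mk] at h2; omega) | omega)))
  · intro h; exact absurd (Finset.mem_univ _) h
  simp only [JsumA, QsumA, phiM, psiM, gp, Fin.val_mk, and_self, if_true, one_mul, mul_one]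
  congr 1
  exact propext ⟨fun h => by omega, fun h => by omega⟩

lemma relB : JsumB K m c * phiM K m n c d = psiM K m n c d * QsumB K n d := by
  ext ⟨i, a⟩ ⟨j, s⟩
  rw [Matrix.mul_apply, Matrix.mul_apply]
  have ha := a.isLt
  have hs := s.isLt
  rw [Finset.sum_eq_single (⟨i, ⟨(a : ℕ) + 1, by omega⟩⟩ : Σ i : Fin m, Fin (c (i.1 + 1)))]
  rotate_left
  · rintro ⟨i', b⟩ - hne
    simp only [JsumB]
    rw [if_neg, zero_mul]
    rintro ⟨rfl, h2⟩
    exact hne (congrArg (Sigma.mk _) (Fin.ext (by first | (simp only [Fin.val_mk] at h2 ⊢; omega) | (simp only [Fin.val_mk] at h2; omega) | omega)))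
  · intro h; exact absurd (Finset.mem_univ _) h
  rw [Finset.sum_eq_single (⟨j, ⟨(s : ℕ) + 1, by omega⟩⟩ : Σ j : Fin n, Fin (d (j.1 + 1)))]
  rotate_left
  · rintro ⟨j', t⟩ - hne
    simp only [QsumB]
    rw [if_neg, mul_zero]
    rintro ⟨rfl, h2⟩
    exact hne (congrArg (Sigma.mk _) (Fin.ext (by first | (simp only [Fin.val_mk] at h2 ⊢; omega) | (simp only [Fin.val_mk] at h2; omega) | omega)))
  · intro h; exact absurd (Finset.mem_univ _) h
  simp only [JsumB, QsumB, phiM, psiM, gp, Fin.val_mk, and_self, if_true, one_mul, mul_one]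
  congr 1
  exact propext ⟨fun h => by omega, fun h => by omega⟩

lemma psi_inj (hle : Dps d n ≤ Cps c m) :
    Function.Injective (psiM K m n c d).mulVecLin := by
  rw [← LinearMap.ker_eq_bot, LinearMap.ker_eq_bot']
  intro v hv
  funext y₀
  obtain ⟨j, s⟩ := y₀
  have hsl := s.isLt
  have hp : Dps d j.1 + (s : ℕ) < Cps c m := by
    have h1 : Dps d (j.1 + 1) ≤ Dps d n := Dps_mono d j.2
    have h2 := Dps_succ d j.1
    omega
  obtain ⟨i, a, him, hac, hgp⟩ := gp_surj c m _ hp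
  have hx := congrFun hv ⟨⟨i, him⟩, ⟨a, hac⟩⟩
  rw [Matrix.mulVecLin_apply] at hx
  simp only [Matrix.mulVec, dotProduct] at hx
  rw [Finset.sum_eq_single (⟨j, s⟩ : Σ j : Fin n, Fin (d (j.1 + 1)))] at hx
  rotate_left
  · rintro ⟨j', t⟩ - hne
    simp only [psiM]
    rw [if_neg, zero_mul]
    intro hcond
    have heq : Dps d j.1 + (s : ℕ) = Dps d j'.1 + (t : ℕ) := by rw [← hgp, ← hcond]
    obtain ⟨hj, hst⟩ := hpos_inj d hsl t.isLt heq
    apply hne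
    have hj' : j' = j := Fin.ext hj.symm
    subst hj'
    exact congrArg (Sigma.mk _) (Fin.ext (by omega))
  · intro h; exact absurd (Finset.mem_univ _) h
  simp only [psiM, Fin.val_mk] at hx
  rw [if_pos hgp, one_mul] at hx
  simpa using hx

lemma qa_inj : Function.Injective (QsumA K n d).mulVecLin := by
  rw [← LinearMap.ker_eq_bot, LinearMap.ker_eq_bot']
  intro v hv
  funext y₀
  obtain ⟨j, s⟩ := y₀
  have hsl := s.isLt
  have hx := congrFun hv ⟨j, ⟨(s : ℕ), by omega⟩⟩
  rw [Matrix.mulVecLin_apply] at hx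
  simp only [Matrix.mulVec, dotProduct] at hx
  rw [Finset.sum_eq_single (⟨j, s⟩ : Σ j : Fin n, Fin (d (j.1 + 1) - 1))] at hx
  rotate_left
  · rintro ⟨j', t⟩ - hne
    simp only [QsumA]
    rw [if_neg, zero_mul]
    rintro ⟨rfl, h2⟩
    exact hne (congrArg (Sigma.mk _) (Fin.ext (by first | (simp only [Fin.val_mk] at h2 ⊢; omega) | (simp only [Fin.val_mk] at h2; omega) | omega)))
  · intro h; exact absurd (Finset.mem_univ _) h
  simp only [QsumA, Fin.val_mk, and_self, if_true, one_mul] at hx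
  simpa using hx

lemma phi_inj (hle : Dps d n ≤ Cps c m) :
    Function.Injective (phiM K m n c d).mulVecLin := by
  rw [← LinearMap.ker_eq_bot, LinearMap.ker_eq_bot']
  intro v hv
  rw [Matrix.mulVecLin_apply] at hv
  have h2 : (psiM K m n c d).mulVec ((QsumA K n d).mulVec v) = 0 := by
    rw [Matrix.mulVec_mulVec, ← relA K m n c d, ← Matrix.mulVec_mulVec, hv,
      Matrix.mulVec_zero]
  have h3 : (QsumA K n d).mulVec v = 0 := by
    apply psi_inj K m n c d hle
    rw [Matrix.mulVecLin_apply, h2, map_zero]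
  apply qa_inj K n d
  rw [Matrix.mulVecLin_apply, h3, map_zero]

end PreprojAux

/-- the preprojective representation `N^P = ⊕ⱼ Q_{d j}` is a
subrepresentation of the preinjective representation `M^I = ⊕ᵢ J_{c i}` iff
`Σᵢ (c i − 1) ≥ Σⱼ d j`. -/
theorem preprojective_subrep_preinjective_iff (K : Type*) [Field K] [IsAlgClosed K]
    (m n : ℕ) (c d : ℕ → ℕ)
    (hc_pos : ∀ i, 1 ≤ i → i ≤ m → 1 ≤ c i)
    (hd_pos : ∀ j, 1 ≤ j → j ≤ n → 1 ≤ d j) :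
    (∃ (φ : Matrix (Σ i : Fin m, Fin (c (i.1 + 1))) (Σ j : Fin n, Fin (d (j.1 + 1) - 1)) K)
       (ψ : Matrix (Σ i : Fin m, Fin (c (i.1 + 1) - 1)) (Σ j : Fin n, Fin (d (j.1 + 1))) K),
        Function.Injective φ.mulVecLin ∧ Function.Injective ψ.mulVecLin ∧
        JsumA K m c * φ = ψ * QsumA K n d ∧ JsumB K m c * φ = ψ * QsumB K n d) ↔
    (∑ j ∈ Finset.Icc 1 n, d j ≤ ∑ i ∈ Finset.Icc 1 m, (c i - 1)) := by
  constructor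
  · rintro ⟨φ, ψ, hφ, hψ, hA, hB⟩
    have h1 := LinearMap.finrank_le_finrank_of_injective hψ
    rw [Module.finrank_pi, Module.finrank_pi, Fintype.card_sigma, Fintype.card_sigma] at h1
    simp only [Fintype.card_fin] at h1
    rw [PreprojAux.sum_Icc_one d n, PreprojAux.sum_Icc_one (fun i => c i - 1) m]
    rw [← Fin.sum_univ_eq_sum_range (fun k => d (k + 1)) n,
      ← Fin.sum_univ_eq_sum_range (fun k => c (k + 1) - 1) m]
    exact h1
  · intro hle
    have hle' : PreprojAux.Dps d n ≤ PreprojAux.Cps c m := by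
      unfold PreprojAux.Dps PreprojAux.Cps
      rw [← PreprojAux.sum_Icc_one d n, ← PreprojAux.sum_Icc_one (fun i => c i - 1) m]
      exact hle
    exact ⟨PreprojAux.phiM K m n c d, PreprojAux.psiM K m n c d,
      PreprojAux.phi_inj K m n c d hle', PreprojAux.psi_inj K m n c d hle',
      PreprojAux.relA K m n c d, PreprojAux.relB K m n c d⟩
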